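/- Let 0 < γ ≤ 1 and let K ⊂ ℝ^d be a convex body in γ-canonical form. Let y ∈ K with y ≠ O, and let p be the intersection point of ∂K with the ray emanating from O through y. Then p ∈ M^{1/γ}(y). -/

import Mathlib

/-- The Macbeath region `M^λ(x) = x + λ((K − x) ∩ (x − K))` of a convex body `K ⊆ ℝ^d`
at a point `x`, with scaling factor `λ`. -/
def Mreg {d : ℕ} (K : Set (EuclideanSpace ℝ (Fin d))) (x : EuclideanSpace ℝ (Fin d))
    (l : ℝ) : Set (EuclideanSpace ℝ (Fin d)) :=
  {z | ∃ y, x + y ∈ K ∧ x - y ∈ K ∧ z = x + l • y}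

/-- Let `0 < γ ≤ 1` and let `K ⊆ ℝ^d` be a convex body in γ-canonical
form. Let `y ∈ K` with `y ≠ O`, and let `p` be the intersection point of `∂K` with the
ray emanating from `O` through `y`. Then `p ∈ M^{1/γ}(y)`. -/
theorem stmt12 {d : ℕ} (γ : ℝ) (hγ0 : 0 < γ) (hγ1 : γ ≤ 1)
    (K : Set (EuclideanSpace ℝ (Fin d)))
    (hK : Convex ℝ K) (hKc : IsCompact K) (hKi : (interior K).Nonempty)
    (hcan₁ : Metric.closedBall (0 : EuclideanSpace ℝ (Fin d)) (γ / 2) ⊆ K)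
    (hcan₂ : K ⊆ Metric.closedBall (0 : EuclideanSpace ℝ (Fin d)) (1 / 2))
    (y : EuclideanSpace ℝ (Fin d)) (hy : y ∈ K) (hy0 : y ≠ 0)
    (p : EuclideanSpace ℝ (Fin d)) (hp : p ∈ frontier K)
    (hray : ∃ t : ℝ, 0 ≤ t ∧ p = t • y) :
    p ∈ Mreg K y (1 / γ) := by
  obtain ⟨t, ht0, hpt⟩ := hray
  have hKclosed : IsClosed K := hKc.isClosed
  have hpK : p ∈ K := by
    have := frontier_subset_closure hp
    rwa [hKclosed.closure_eq] at this
  have hpnotint : p ∉ interior K := hp.2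
  have h0int : (0 : EuclideanSpace ℝ (Fin d)) ∈ interior K := by
    apply interior_maximal (le_trans Metric.ball_subset_closedBall hcan₁) Metric.isOpen_ball
    simpa using half_pos hγ0
  -- t ≥ 1
  have ht1 : 1 ≤ t := by
    by_contra h
    push_neg at h
    rcases eq_or_lt_of_le ht0 with h0 | h0
    · apply hpnotint
      rw [hpt, ← h0, zero_smul]
      exact h0int
    · apply hpnotint
      have := hK.combo_interior_self_mem_interior h0int hy (a := 1 - t) (b := t)
        (by linarith) (le_of_lt h0) (by ring)
      rw [smul_zero, zero_add] at this
      rwa [hpt]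
  have ht0' : (0 : ℝ) < t := lt_of_lt_of_le one_pos ht1
  -- the witness
  refine ⟨γ • (p - y), ?_, ?_, ?_⟩
  · -- y + γ(p − y) = (1−γ)y + γp ∈ K
    have : y + γ • (p - y) = (1 - γ) • y + γ • p := by module
    rw [this]
    exact hK hy hpK (by linarith) (le_of_lt hγ0) (by ring)
  · -- y − γ(p−y) ∈ K as a convex combination of −γ•p and p
    have hnp : -γ • p ∈ K := by
      apply hcan₁
      rw [Metric.mem_closedBall, dist_zero_right, norm_smul]
      have hpn : ‖p‖ ≤ 1 / 2 := by
        have := hcan₂ hpK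
        rwa [Metric.mem_closedBall, dist_zero_right] at this
      rw [Real.norm_eq_abs, abs_neg, abs_of_pos hγ0]
      nlinarith [norm_nonneg p]
    set s : ℝ := (1 + γ) / t - γ with hs
    set a : ℝ := (1 - s) / (1 + γ) with ha
    have hs1 : s ≤ 1 := by
      rw [hs, div_sub' (ne_of_gt ht0'), div_le_one ht0']
      nlinarith
    have hsγ : -γ ≤ s := by
      rw [hs]
      have : (0 : ℝ) ≤ (1 + γ) / t := by positivity
      linarith
    have ha0 : 0 ≤ a := by
      apply div_nonneg (by linarith) (by linarith)
    have ha1 : a ≤ 1 := by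
      rw [ha, div_le_one (by linarith)]
      linarith
    have hmem : a • (-γ • p) + (1 - a) • p ∈ K :=
      hK hnp hpK ha0 (by linarith) (by ring)
    have heq : y - γ • (p - y) = a • (-γ • p) + (1 - a) • p := by
      have hyp : y = t⁻¹ • p := by
        rw [hpt, smul_smul, inv_mul_cancel₀ (ne_of_gt ht0'), one_smul]
      have hsc : a * -γ + (1 - a) = t⁻¹ + γ * t⁻¹ - γ := by
        rw [ha, hs]
        field_simp
        ring
      rw [hyp, smul_smul, ← add_smul, hsc]
      module
    rw [heq]
    exact hmem
  · rw [smul_smul, one_div, inv_mul_cancel₀ (ne_of_gt hγ0), one_smul]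
    abel
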